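/- Let k be a field, R = k[x_1,…,x_n], and let ℓ_1,…,ℓ_n ∈ R_1 be k-linearly independent linear forms. Let I ⊆ R be a proper homogeneous 𝔪-primary ideal with dim_k Soc(R/I) = 1 and socle degree s. Suppose f is a homogeneous polynomial with I = (ℓ_1^{s+1},…,ℓ_n^{s+1}) : (f) such that, writing f = F(ℓ_1,…,ℓ_n) for a polynomial F in n variables, every exponent vector in the support of F has all coordinates ≤ s (i.e. no nonzero term of f, expressed in the ℓ's, lies in (ℓ_1^{s+1},…,ℓ_n^{s+1})). Let m₀ be the least integer m ≥ 1 such that ℓ_i^m ∈ I for all 1 ≤ i ≤ n (it exists and satisfies m₀ ≤ s+1), and set g := s + 1 − m₀ (the pure power gap of I with respect to ℓ_1,…,ℓ_n). Then (ℓ_1·ℓ_2⋯ℓ_n)^g divides f, and g is the largest integer with this property. -/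

import Mathlib

open MvPolynomial

/-- The maximal graded ideal `𝔪 = (x_1, …, x_n)` of `k[x_1,…,x_n]`. -/
noncomputable def mIdealN (k : Type*) [Field k] (n : ℕ) : Ideal (MvPolynomial (Fin n) k) :=
  Ideal.span (Set.range (X : Fin n → MvPolynomial (Fin n) k))

/-- `dim_k Soc(R/I)`, the total dimension of the socle `(I : 𝔪)/I` of `R/I`. -/
noncomputable def socDimN {k : Type*} [Field k] {n : ℕ}
    (I : Ideal (MvPolynomial (Fin n) k)) : ℕ :=
  Module.finrank k
    ↥(Submodule.map (Ideal.Quotient.mkₐ k I).toLinearMap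
      ((Submodule.colon I (mIdealN k n)).restrictScalars k))


lemma degOne_single {n : ℕ} (α : Fin n →₀ ℕ) (h : α.degree = 1) :
    ∃ j, α = Finsupp.single j 1 := by
  classical
  have h' : ∑ i ∈ α.support, α i = 1 := h
  have hα0 : α ≠ 0 := by
    rintro rfl; simp [Finsupp.degree] at h
  obtain ⟨j, hj⟩ := Finsupp.ne_iff.mp hα0
  simp only [Finsupp.coe_zero, Pi.zero_apply] at hj
  have hjs : j ∈ α.support := Finsupp.mem_support_iff.mpr hj
  have hj1 : α j = 1 := by
    have hle : α j ≤ ∑ i ∈ α.support, α i :=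
      Finset.single_le_sum (fun i _ => Nat.zero_le (α i)) hjs
    omega
  refine ⟨j, Finsupp.ext fun i => ?_⟩
  rw [Finsupp.single_apply]
  by_cases hij : j = i
  · subst hij; simpa using hj1
  · simp only [if_neg hij]
    by_contra hi
    have his : i ∈ α.support := Finsupp.mem_support_iff.mpr hi
    have hsub : ({i, j} : Finset (Fin n)) ⊆ α.support := by
      intro t ht
      simp only [Finset.mem_insert, Finset.mem_singleton] at ht
      rcases ht with rfl | rfl <;> assumption
    have h2 : ∑ t ∈ ({i, j} : Finset (Fin n)), α t ≤ ∑ t ∈ α.support, α t :=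
      Finset.sum_le_sum_of_subset hsub
    rw [Finset.sum_insert (by simp [Ne.symm hij]), Finset.sum_singleton] at h2
    omega

lemma homog_one_repr {k : Type*} [Field k] {n : ℕ} (p : MvPolynomial (Fin n) k)
    (hp : p.IsHomogeneous 1) :
    p = ∑ j, (coeff (Finsupp.single j 1) p) • X j := by
  classical
  ext m
  rw [coeff_sum]
  simp only [coeff_smul, coeff_X', smul_eq_mul, mul_ite, mul_one, mul_zero]
  by_cases h : ∃ j, Finsupp.single j 1 = m
  · obtain ⟨j, rfl⟩ := h
    rw [Finset.sum_eq_single_of_mem j (Finset.mem_univ j)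
      (fun j' _ hj' => if_neg (fun hc => hj' ((Finsupp.single_left_inj one_ne_zero).mp hc)))]
    rw [if_pos rfl]
  · have hm : coeff m p = 0 := by
      by_contra hc
      have := hp hc
      have hdeg : m.degree = 1 := by rwa [Finsupp.degree_eq_weight_one]
      obtain ⟨j, rfl⟩ := degOne_single m hdeg
      exact h ⟨j, rfl⟩
    rw [hm]
    rw [Finset.sum_congr rfl (fun j' _ => if_neg (fun hc => h ⟨j', hc⟩))]
    simp

lemma key_sub {k : Type*} [Field k] {n : ℕ} (A B : Matrix (Fin n) (Fin n) k)
    (hBA : B * A = 1) (v : Fin n → MvPolynomial (Fin n) k)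
    (hv : ∀ m, v m = ∑ p, A m p • X p) (j : Fin n) :
    MvPolynomial.aeval (R := k) v (∑ m, B j m • X m) = X j := by
  classical
  rw [map_sum]
  simp only [map_smul, aeval_X, hv, Finset.smul_sum, smul_smul]
  rw [Finset.sum_comm]
  simp only [← Finset.sum_smul, ← Matrix.mul_apply, hBA, Matrix.one_apply]
  rw [Finset.sum_eq_single_of_mem j (Finset.mem_univ j)
    (fun p _ hp => by rw [if_neg (Ne.symm hp), zero_smul])]
  rw [if_pos rfl, one_smul]

lemma J0_mem {k : Type*} [Field k] {n s : ℕ} (p : MvPolynomial (Fin n) k) :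
    p ∈ Ideal.span (Set.range fun i => (X i : MvPolynomial (Fin n) k) ^ (s + 1)) ↔
      ∀ α ∈ p.support, ∃ i, s + 1 ≤ α i := by
  classical
  have himg : (Set.range fun i => (X i : MvPolynomial (Fin n) k) ^ (s + 1)) =
      (fun u => monomial u (1 : k)) '' (Set.range fun i => Finsupp.single i (s + 1)) := by
    rw [← Set.range_comp]
    exact congrArg Set.range (funext fun i => X_pow_eq_monomial)
  rw [himg, mem_ideal_span_monomial_image]
  constructor
  · intro h α hα
    obtain ⟨u, ⟨i, rfl⟩, hle⟩ := h α hα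
    exact ⟨i, Finsupp.single_le_iff.mp hle⟩
  · intro h α hα
    obtain ⟨i, hi⟩ := h α hα
    exact ⟨Finsupp.single i (s + 1), ⟨i, rfl⟩, Finsupp.single_le_iff.mpr hi⟩

lemma dvd_mem {k : Type*} [Field k] {n K : ℕ} (F : MvPolynomial (Fin n) k) :
    (∏ i, (X i : MvPolynomial (Fin n) k)) ^ K ∣ F ↔
      ∀ α ∈ F.support, ∀ i, K ≤ α i := by
  classical
  have hmono : (∏ i, (X i : MvPolynomial (Fin n) k)) ^ K
      = monomial (∑ i, Finsupp.single i K) (1 : k) := by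
    rw [monomial_sum_one]
    rw [← Finset.prod_pow]
    exact congrArg _ (funext fun i => by rw [X_pow_eq_monomial])
  rw [hmono, ← Ideal.mem_span_singleton,
    show ({monomial (∑ i, Finsupp.single i K) (1 : k)} : Set (MvPolynomial (Fin n) k))
      = (fun u => monomial u (1 : k)) '' {∑ i, Finsupp.single i K} from by simp,
    mem_ideal_span_monomial_image]
  have happ : ∀ i : Fin n, (∑ j, Finsupp.single j K : Fin n →₀ ℕ) i = K := by
    intro i
    rw [Finset.sum_apply']
    rw [Finset.sum_eq_single_of_mem i (Finset.mem_univ i)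
      (fun j _ hj => Finsupp.single_eq_of_ne' hj)]
    exact Finsupp.single_eq_same
  constructor
  · intro h α hα i
    obtain ⟨u, hu, hle⟩ := h α hα
    rw [Set.mem_singleton_iff] at hu
    subst hu
    exact happ i ▸ hle i
  · intro h α hα
    refine ⟨_, Set.mem_singleton _, fun i => ?_⟩
    rw [happ i]
    exact h α hα i

lemma pow_mul_mem {k : Type*} [Field k] {n s : ℕ} (F : MvPolynomial (Fin n) k)
    (hFbox : ∀ α ∈ F.support, ∀ j, α j ≤ s) (i : Fin n) (m : ℕ) :
    (X i : MvPolynomial (Fin n) k) ^ m * F ∈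
        Ideal.span (Set.range fun i => (X i : MvPolynomial (Fin n) k) ^ (s + 1)) ↔
      ∀ α ∈ F.support, s + 1 ≤ α i + m := by
  classical
  rw [J0_mem]
  constructor
  · intro h α hα
    have hco : coeff (Finsupp.single i m + α) ((X i : MvPolynomial (Fin n) k) ^ m * F)
        = coeff α F := by
      rw [X_pow_eq_monomial, coeff_monomial_mul, one_mul]
    have hmem : (Finsupp.single i m + α) ∈ ((X i : MvPolynomial (Fin n) k) ^ m * F).support := by
      rw [mem_support_iff, hco]
      exact mem_support_iff.mp hα
    obtain ⟨j, hj⟩ := h _ hmem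
    rw [Finsupp.add_apply] at hj
    by_cases hji : j = i
    · subst hji
      rw [Finsupp.single_eq_same] at hj
      omega
    · rw [Finsupp.single_eq_of_ne' (fun h' => hji h'.symm)] at hj
      have := hFbox α hα j
      omega
  · intro h β hβ
    rw [mem_support_iff, X_pow_eq_monomial, coeff_monomial_mul'] at hβ
    by_cases hle : Finsupp.single i m ≤ β
    · rw [if_pos hle] at hβ
      have hα : β - Finsupp.single i m ∈ F.support := by
        rw [mem_support_iff]
        intro h0
        rw [h0, mul_zero] at hβ
        exact hβ rfl
      have hβi : m ≤ β i := Finsupp.single_le_iff.mp hle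
      have hsub : (β - Finsupp.single i m) i = β i - m := by
        rw [Finsupp.tsub_apply, Finsupp.single_eq_same]
      have := h _ hα
      rw [hsub] at this
      exact ⟨i, by omega⟩
    · rw [if_neg hle] at hβ
      exact absurd rfl hβ


/-- Let `I ⊆ k[x_1,…,x_n]` be a proper homogeneous `𝔪`-primary Gorenstein ideal with socle
degree `s`, let `ℓ_1,…,ℓ_n` be linearly independent linear forms, and suppose
`I = (ℓ_1^{s+1},…,ℓ_n^{s+1}) : (f)` for a homogeneous `f` no term of which (written as a
polynomial `F` in the `ℓ`'s) lies in `(ℓ_1^{s+1},…,ℓ_n^{s+1})`. Then the least `m₀ ≥ 1`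
with all `ℓ_i^{m₀} ∈ I` exists, satisfies `m₀ ≤ s+1`, and the pure power gap
`g = s+1−m₀` is the largest integer such that `(ℓ_1⋯ℓ_n)^g` divides `f`. -/
theorem stmt18 {k : Type*} [Field k] (n : ℕ) (hn : 1 ≤ n)
    (ℓ : Fin n → MvPolynomial (Fin n) k)
    (hhom : ∀ i, (ℓ i).IsHomogeneous 1)
    (hli : LinearIndependent k ℓ)
    (I : Ideal (MvPolynomial (Fin n) k))
    (hproper : I ≠ ⊤)
    (hprim : ∃ N : ℕ, 1 ≤ N ∧ (mIdealN k n) ^ N ≤ I)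
    (hsoc : socDimN I = 1)
    (s : ℕ)
    (hs : IsGreatest {t : ℕ | ∃ h : MvPolynomial (Fin n) k, h.IsHomogeneous t ∧ h ∉ I} s)
    (f : MvPolynomial (Fin n) k) (hfhom : ∃ e : ℕ, f.IsHomogeneous e)
    (hcolon : I = Submodule.colon
      (Ideal.span (Set.range fun i => ℓ i ^ (s + 1))) (Ideal.span {f}))
    (hsupp : ∃ F : MvPolynomial (Fin n) k,
      MvPolynomial.aeval ℓ F = f ∧ ∀ α ∈ F.support, ∀ i, α i ≤ s) :
    ∃ m₀ : ℕ,
      IsLeast {m : ℕ | 1 ≤ m ∧ ∀ i, ℓ i ^ m ∈ I} m₀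
      ∧ m₀ ≤ s + 1
      ∧ IsGreatest {K : ℕ | (∏ i, ℓ i) ^ K ∣ f} (s + 1 - m₀) := by
  classical
  obtain ⟨F, hF, hFbox⟩ := hsupp
  -- the coefficient matrix of the linear forms
  set A : Matrix (Fin n) (Fin n) k := fun i j => coeff (Finsupp.single j 1) (ℓ i) with hAdef
  have hrepr : ∀ i, ℓ i = ∑ j, A i j • X j := fun i => homog_one_repr (ℓ i) (hhom i)
  have hAli : LinearIndependent k (fun i => A i) := by
    rw [Fintype.linearIndependent_iff]
    intro g hg
    refine Fintype.linearIndependent_iff.mp hli g ?_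
    have hg' : ∀ j, ∑ i, g i * A i j = 0 := by
      intro j
      have := congrFun hg j
      simpa using this
    calc ∑ i, g i • ℓ i = ∑ i, ∑ j, (g i * A i j) • X j := by
          simp only [hrepr, Finset.smul_sum, smul_smul]
      _ = ∑ j, (∑ i, g i * A i j) • X j := by
          rw [Finset.sum_comm]; simp only [Finset.sum_smul]
      _ = 0 := by simp [hg']
  obtain ⟨u, hu⟩ := Matrix.linearIndependent_rows_iff_isUnit.mp hAli
  set B : Matrix (Fin n) (Fin n) k := ↑u⁻¹ with hBdef
  have hAB : A * B = 1 := by rw [hBdef, show A = ↑u from hu.symm]; exact u.mul_inv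
  have hBA : B * A = 1 := by rw [hBdef, show A = ↑u from hu.symm]; exact u.inv_mul
  set ℓ' : Fin n → MvPolynomial (Fin n) k := fun j => ∑ m, B j m • X m with hl'def
  have h2 : ∀ j, aeval ℓ (ℓ' j) = X j := fun j => key_sub A B hBA ℓ hrepr j
  have h1 : ∀ i, aeval ℓ' (ℓ i) = X i := by
    intro i
    rw [hrepr i]
    exact key_sub B A hAB ℓ' (fun m => rfl) i
  set e : MvPolynomial (Fin n) k ≃ₐ[k] MvPolynomial (Fin n) k :=
    AlgEquiv.ofAlgHom (aeval ℓ) (aeval ℓ')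
      (by
        apply MvPolynomial.algHom_ext
        intro i
        simp only [AlgHom.comp_apply, aeval_X, AlgHom.id_apply]
        exact h2 i)
      (by
        apply MvPolynomial.algHom_ext
        intro i
        simp only [AlgHom.comp_apply, aeval_X, AlgHom.id_apply]
        exact h1 i) with hedef
  have he_apply : ∀ p, e p = aeval (R := k) ℓ p := by
    intro p
    rw [hedef]
    rfl
  have heX : ∀ i, e (X i) = ℓ i := fun i => by rw [he_apply]; simp
  have heF : e F = f := by rw [he_apply]; exact hF
  have hJ : Ideal.span (Set.range fun i => ℓ i ^ (s + 1))
      = Ideal.map (e : MvPolynomial (Fin n) k ≃+* MvPolynomial (Fin n) k)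
        (Ideal.span (Set.range fun i => (X i : MvPolynomial (Fin n) k) ^ (s + 1))) := by
    rw [Ideal.map_span, ← Set.range_comp]
    refine congrArg _ (congrArg Set.range (funext fun i => ?_))
    show ℓ i ^ (s + 1) = e (X i ^ (s + 1))
    rw [map_pow, heX]
  have hmemJ : ∀ p : MvPolynomial (Fin n) k,
      (e p ∈ Ideal.span (Set.range fun i => ℓ i ^ (s + 1)) ↔
        p ∈ Ideal.span (Set.range fun i => (X i : MvPolynomial (Fin n) k) ^ (s + 1))) := by
    intro p
    rw [hJ]
    exact Ideal.apply_mem_of_equiv_iff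
  have hIf : ∀ r, r ∈ I ↔ r * f ∈ Ideal.span (Set.range fun i => ℓ i ^ (s + 1)) := by
    intro r
    rw [hcolon]; exact Ideal.mem_colon_span_singleton
  have hf0 : f ≠ 0 := by
    intro h0
    apply hproper
    rw [Ideal.eq_top_iff_one]
    exact (hIf 1).mpr (by rw [one_mul, h0]; exact Ideal.zero_mem _)
  have hF0 : F ≠ 0 := fun h0 => hf0 (by rw [← hF, h0, map_zero])
  have hS : F.support.Nonempty :=
    Finset.nonempty_iff_ne_empty.mpr (fun h => hF0 (support_eq_empty.mp h))
  haveI : Nonempty (Fin n) := ⟨⟨0, hn⟩⟩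
  have hnu : (Finset.univ : Finset (Fin n)).Nonempty := Finset.univ_nonempty
  set d : ℕ := F.support.inf' hS (fun α => Finset.univ.inf' hnu fun i => α i) with hd
  have hd_le : ∀ α ∈ F.support, ∀ i, d ≤ α i := fun α hα i =>
    le_trans (Finset.inf'_le _ hα) (Finset.inf'_le _ (Finset.mem_univ i))
  obtain ⟨α₀, hα₀, hα₀eq⟩ :=
    Finset.exists_mem_eq_inf' hS (fun α => Finset.univ.inf' hnu fun i => α i)
  obtain ⟨i₀, -, hi₀⟩ := Finset.exists_mem_eq_inf' hnu (fun i => α₀ i)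
  have hdval : d = α₀ i₀ := hα₀eq.trans hi₀
  have hds : d ≤ s := hdval ▸ hFbox α₀ hα₀ i₀
  have hlI : ∀ (m : ℕ) (i : Fin n),
      (ℓ i ^ m ∈ I ↔ ∀ α ∈ F.support, s + 1 ≤ α i + m) := by
    intro m i
    rw [hIf, show ℓ i ^ m * f = e (X i ^ m * F) from by rw [map_mul, map_pow, heX, heF],
      hmemJ, pow_mul_mem F hFbox]
  have hdvdI : ∀ K : ℕ, ((∏ i, ℓ i) ^ K ∣ f ↔ ∀ α ∈ F.support, ∀ i, K ≤ α i) := by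
    intro K
    have heP : e ((∏ i, X i : MvPolynomial (Fin n) k) ^ K) = (∏ i, ℓ i) ^ K := by
      rw [map_pow, map_prod]
      exact congrArg (· ^ K) (Finset.prod_congr rfl fun i _ => heX i)
    rw [← dvd_mem (K := K) F]
    constructor
    · intro h
      have h' := map_dvd e.symm h
      rw [← heP, ← heF, AlgEquiv.symm_apply_apply, AlgEquiv.symm_apply_apply] at h'
      exact h'
    · intro h
      have h' := map_dvd e h
      rwa [heP, heF] at h'
  refine ⟨s + 1 - d, ⟨⟨by omega, fun i => ?_⟩, fun m hm => ?_⟩, by omega, ?_⟩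
  · rw [hlI]
    intro α hα
    have := hd_le α hα i
    omega
  · obtain ⟨hm1, hmI⟩ := hm
    have := (hlI m i₀).mp (hmI i₀) α₀ hα₀
    omega
  · have hg : s + 1 - (s + 1 - d) = d := by omega
    rw [hg]
    constructor
    · show (∏ i, ℓ i) ^ d ∣ f
      rw [hdvdI]
      exact hd_le
    · intro K hK
      have := (hdvdI K).mp hK α₀ hα₀ i₀
      omega
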